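/- Let X and Y be finite sets, let S_X be a nonempty compact convex set of probability distributions on X, and let S_Y be a nonempty compact convex set of probability distributions on Y. Let p be a joint probability distribution on X × Y such that the marginal distribution (p(x))_{x∈X} belongs to S_X and, for every x ∈ X with p(x) > 0, the conditional distribution (p(y|x))_{y∈Y} belongs to S_Y. Then p lies in the convex hull of the set of joint distributions of the form q(x,y) = r(x)·f_x(y), where r is an extreme point of S_X and, for each x ∈ X, f_x is an extreme point of S_Y. -/

import Mathlib

open Set Module

-- supporting functional lemma
lemma exists_supporting {E : Type*} [NormedAddCommGroup E] [NormedSpace ℝ E]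
    [FiniteDimensional ℝ E] {s : Set E} (hcomp : IsCompact s) (hconv : Convex ℝ s)
    {b d : E} (hb : b ∈ s) (hd : d ∈ vectorSpan ℝ s)
    (hout : ∀ ε : ℝ, 0 < ε → b + ε • d ∉ s) :
    ∃ L : E →ₗ[ℝ] ℝ, (∀ z ∈ s, L z ≤ L b) ∧ (∃ z ∈ s, L z < L b) := by
  have hd0 : d ≠ 0 := by
    rintro rfl
    exact hout 1 one_pos (by simpa using hb)
  set V : Submodule ℝ E := vectorSpan ℝ s with hV
  set s₀ : Set V := {z : V | (z : E) + b ∈ s} with hs₀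
  have hsub : ∀ w ∈ s, w - b ∈ V := fun w hw => vsub_mem_vectorSpan ℝ hw hb
  have himg : (Subtype.val '' s₀ : Set E) = (fun w => w - b) '' s := by
    ext z
    constructor
    · rintro ⟨⟨z, hzV⟩, hz, rfl⟩
      exact ⟨z + b, hz, by simp⟩
    · rintro ⟨w, hw, rfl⟩
      exact ⟨⟨w - b, hsub w hw⟩, by simpa [hs₀] using hw, rfl⟩
  have hcomp₀ : IsCompact s₀ := by
    rw [Topology.IsEmbedding.subtypeVal.isCompact_iff, himg]
    exact hcomp.image (continuous_id.sub continuous_const)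
  have hconv₀ : Convex ℝ s₀ := by
    intro z hz w hw a c ha hc hac
    have hc' : c = 1 - a := by linarith
    subst hc'
    simp only [hs₀, mem_setOf_eq] at *
    have h1 : ((a • z + (1-a) • w : V) : E) + b = a • ((z:E)+b) + (1-a) • ((w:E)+b) := by
      push_cast
      module
    rw [h1]
    exact hconv hz hw ha hc (by ring)
  have hne₀ : (0:V) ∈ s₀ := by simpa [hs₀] using hb
  have hvs : vectorSpan ℝ s₀ = (⊤ : Submodule ℝ V) := by
    apply Submodule.map_injective_of_injective (Submodule.injective_subtype V)
    rw [Submodule.map_subtype_top]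
    rw [vectorSpan, Submodule.map_span]
    have hset : (V.subtype '' (s₀ -ᵥ s₀)) = s -ᵥ s := by
      ext e
      constructor
      · rintro ⟨w, ⟨z₁, hz₁, z₂, hz₂, rfl⟩, rfl⟩
        exact ⟨(z₁ : E) + b, hz₁, (z₂ : E) + b, hz₂, by simp [vsub_eq_sub]⟩
      · rintro ⟨w₁, hw₁, w₂, hw₂, rfl⟩
        refine ⟨⟨w₁ - b, hsub w₁ hw₁⟩ -ᵥ ⟨w₂ - b, hsub w₂ hw₂⟩, 
          Set.vsub_mem_vsub (by simpa [hs₀] using hw₁) (by simpa [hs₀] using hw₂), ?_⟩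
        simp [vsub_eq_sub]
    rw [hset, hV, vectorSpan]
  have hspan : affineSpan ℝ s₀ = ⊤ := by
    rw [AffineSubspace.affineSpan_eq_top_iff_vectorSpan_eq_top_of_nonempty ℝ ↥V ↥V ⟨0, hne₀⟩]
    exact hvs
  have hint : (interior s₀).Nonempty := hconv₀.interior_nonempty_iff_affineSpan_eq_top.mpr hspan
  have h0ni : (0:V) ∉ interior s₀ := by
    intro h
    obtain ⟨δ, hδ, hball⟩ := Metric.isOpen_iff.mp isOpen_interior 0 h
    have hdn : 0 < ‖d‖ := norm_pos_iff.mpr hd0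
    set ε : ℝ := δ / (2 * ‖d‖) with hε
    have hεpos : 0 < ε := by positivity
    have hmem : (ε • (⟨d, hd⟩ : V)) ∈ Metric.ball (0:V) δ := by
      have hnv : ‖(⟨d, hd⟩ : V)‖ = ‖d‖ := rfl
      simp only [Metric.mem_ball, dist_zero_right, norm_smul, Real.norm_eq_abs,
        abs_of_pos hεpos, hnv]
      rw [hε, div_mul_eq_mul_div, div_lt_iff₀ (by positivity)]
      nlinarith
    have : (ε • (⟨d, hd⟩ : V)) ∈ s₀ := interior_subset (hball hmem)
    have : b + ε • d ∈ s := by simpa [hs₀, add_comm] using this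
    exact hout ε hεpos this
  obtain ⟨l, hl⟩ := geometric_hahn_banach_open_point (hconv₀.interior) isOpen_interior h0ni
  obtain ⟨w, hw⟩ := hint
  have hw0 : l w < 0 := by simpa using hl w hw
  have hle : ∀ z ∈ s₀, l z ≤ 0 := by
    intro z hz
    by_contra hcon
    push_neg at hcon
    have hlt : 0 < l z - l w := by linarith
    set t : ℝ := l z / (2 * (l z - l w)) with ht
    have ht0 : 0 < t := by positivity
    have ht1 : t ≤ 1 := by
      rw [ht, div_le_one (by linarith)]
      linarith
    have hu : t • w + (1 - t) • z ∈ interior s₀ :=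
      hconv₀.combo_interior_self_mem_interior hw hz ht0 (by linarith) (by ring)
    have := hl _ hu
    simp only [map_add, map_smul, map_zero, smul_eq_mul] at this
    have htval : t * (l z - l w) = l z / 2 := by
      rw [ht]; field_simp
    nlinarith
  obtain ⟨q, hq⟩ := Submodule.exists_isCompl V
  set π := V.linearProjOfIsCompl q hq with hπ
  refine ⟨(l : V →ₗ[ℝ] ℝ).comp π, ?_, ?_⟩
  · intro z hz
    have hdiff : ((⟨z - b, hsub z hz⟩ : V) : E) + b ∈ s := by simpa using hz
    have := hle _ hdiff
    have hπd : π (z - b) = ⟨z - b, hsub z hz⟩ := by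
      rw [hπ]
      exact Submodule.linearProjOfIsCompl_apply_left hq ⟨z - b, hsub z hz⟩
    simp only [LinearMap.comp_apply, ContinuousLinearMap.coe_coe]
    have : l (π z) - l (π b) = l (π (z - b)) := by rw [map_sub, map_sub]
    rw [hπd] at this
    have h2 := hle _ hdiff
    linarith [this, h2]
  · refine ⟨(w : E) + b, by simpa [hs₀] using interior_subset hw, ?_⟩
    have hπw : π ((w:E) + b) - π b = (w : V) := by
      have : ((w:E) + b) - b = (w : E) := by abel
      rw [← map_sub, this, hπ]
      exact Submodule.linearProjOfIsCompl_apply_left hq w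
    simp only [LinearMap.comp_apply, ContinuousLinearMap.coe_coe]
    have : l (π ((w:E)+b)) - l (π b) = l w := by rw [← map_sub, hπw]
    linarith

lemma extreme_of_subsingleton {E : Type*} [NormedAddCommGroup E] [NormedSpace ℝ E]
    {s : Set E} {x : E} (hx : x ∈ s) (hsing : ∀ y ∈ s, y = x) :
    x ∈ s.extremePoints ℝ := by
  refine ⟨hx, fun x₁ hx₁ x₂ hx₂ _ => hsing x₁ hx₁⟩

lemma minkowski_aux {E : Type*} [NormedAddCommGroup E] [NormedSpace ℝ E]
    [FiniteDimensional ℝ E] :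
    ∀ (n : ℕ) (s : Set E), IsCompact s → Convex ℝ s →
      Module.finrank ℝ (vectorSpan ℝ s) ≤ n → s ⊆ convexHull ℝ (s.extremePoints ℝ) := by
  intro n
  induction n with
  | zero =>
    intro s hcomp hconv hrank x hx
    have hbot : vectorSpan ℝ s = ⊥ := by
      rw [← Submodule.finrank_eq_zero]
      omega
    have hsing : ∀ y ∈ s, y = x := by
      intro y hy
      have : y - x ∈ vectorSpan ℝ s := vsub_mem_vectorSpan ℝ hy hx
      rw [hbot, Submodule.mem_bot, sub_eq_zero] at this
      exact this
    exact subset_convexHull ℝ _ (extreme_of_subsingleton hx hsing)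
  | succ n IH =>
    intro s hcomp hconv hrank x hx
    by_cases hsing : ∀ y ∈ s, y = x
    · exact subset_convexHull ℝ _ (extreme_of_subsingleton hx hsing)
    push_neg at hsing
    obtain ⟨y, hy, hyx⟩ := hsing
    set d := y - x with hdd
    have hd : d ∈ vectorSpan ℝ s := vsub_mem_vectorSpan ℝ hy hx
    have hd0 : d ≠ 0 := sub_ne_zero.mpr hyx
    have hdn : 0 < ‖d‖ := norm_pos_iff.mpr hd0
    set I : Set ℝ := {t | x + t • d ∈ s} with hI
    have hIclosed : IsClosed I := by
      have : Continuous fun t : ℝ => x + t • d := by continuity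
      exact hcomp.isClosed.preimage this
    have hIbdd : Bornology.IsBounded I := by
      obtain ⟨R, hR⟩ := hcomp.isBounded.exists_norm_le
      rw [isBounded_iff_forall_norm_le]
      refine ⟨(R + ‖x‖) / ‖d‖, fun t ht => ?_⟩
      have h1 : ‖x + t • d‖ ≤ R := hR _ ht
      have h2 : ‖t • d‖ ≤ R + ‖x‖ := by
        have : t • d = (x + t • d) - x := by abel
        rw [this]
        calc ‖(x + t • d) - x‖ ≤ ‖x + t • d‖ + ‖x‖ := norm_sub_le _ _
          _ ≤ R + ‖x‖ := by linarith
      rw [norm_smul, Real.norm_eq_abs] at h2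
      rw [Real.norm_eq_abs, le_div_iff₀ hdn]
      exact h2
    have hIcomp : IsCompact I := Metric.isCompact_of_isClosed_isBounded hIclosed hIbdd
    have h0 : (0:ℝ) ∈ I := by simpa [hI] using hx
    have h1 : (1:ℝ) ∈ I := by simpa [hI, hdd] using hy
    set α := sInf I with hα
    set β := sSup I with hβ
    have hαI : α ∈ I := hIcomp.sInf_mem ⟨0, h0⟩
    have hβI : β ∈ I := hIcomp.sSup_mem ⟨0, h0⟩
    have hα0 : α ≤ 0 := csInf_le hIcomp.bddBelow h0
    have hβ1 : 1 ≤ β := le_csSup hIcomp.bddAbove h1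
    set a := x + α • d with ha
    set b := x + β • d with hb
    have has : a ∈ s := hαI
    have hbs : b ∈ s := hβI
    -- key face argument
    have key : ∀ c ∈ s, ∀ e ∈ vectorSpan ℝ s, (∀ ε : ℝ, 0 < ε → c + ε • e ∉ s) →
        c ∈ convexHull ℝ (s.extremePoints ℝ) := by
      intro c hc e he hout
      obtain ⟨L, hL1, z, hz, hz2⟩ := exists_supporting hcomp hconv hc he hout
      let Lc := LinearMap.toContinuousLinearMap L
      set F := {w ∈ s | ∀ v ∈ s, Lc v ≤ Lc w} with hF
      have hFexp : IsExposed ℝ s F := fun _ => ⟨Lc, rfl⟩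
      have hLcL : ∀ v, Lc v = L v := fun v => rfl
      have hcF : c ∈ F := ⟨hc, fun v hv => by rw [hLcL, hLcL]; exact hL1 v hv⟩
      have hFcomp := hFexp.isCompact hcomp
      have hFconv := hFexp.convex hconv
      have hFextr := hFexp.isExtreme
      have hrankF : Module.finrank ℝ (vectorSpan ℝ F) ≤ n := by
        have hsubF : vectorSpan ℝ F ≤ vectorSpan ℝ s ⊓ LinearMap.ker L := by
          rw [vectorSpan, Submodule.span_le]
          rintro _ ⟨w₁, hw₁, w₂, hw₂, rfl⟩
          constructor
          · exact vsub_mem_vectorSpan ℝ (hFexp.subset hw₁) (hFexp.subset hw₂)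
          · have e1 := hw₁.2 w₂ (hFexp.subset hw₂)
            have e2 := hw₂.2 w₁ (hFexp.subset hw₁)
            rw [hLcL, hLcL] at e1 e2
            simp only [SetLike.mem_coe, LinearMap.mem_ker, vsub_eq_sub, map_sub]
            linarith
        have hlt : vectorSpan ℝ s ⊓ LinearMap.ker L < vectorSpan ℝ s := by
          refine lt_of_le_of_ne inf_le_left (fun hEq => ?_)
          have hm : c - z ∈ vectorSpan ℝ s := vsub_mem_vectorSpan ℝ hc hz
          rw [← hEq] at hm
          have : L (c - z) = 0 := hm.2
          rw [map_sub] at this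
          linarith
        have h3 : Module.finrank ℝ ↥(vectorSpan ℝ s ⊓ LinearMap.ker L) <
            Module.finrank ℝ ↥(vectorSpan ℝ s) := Submodule.finrank_lt_finrank_of_lt hlt
        have h4 : Module.finrank ℝ ↥(vectorSpan ℝ F) ≤
            Module.finrank ℝ ↥(vectorSpan ℝ s ⊓ LinearMap.ker L) := Submodule.finrank_mono hsubF
        omega
      have hchull := IH F hFcomp hFconv hrankF hcF
      exact convexHull_mono (hFextr.extremePoints_subset_extremePoints) hchull
    have houtb : ∀ ε : ℝ, 0 < ε → b + ε • d ∉ s := by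
      intro ε hε hmem
      have : β + ε ∈ I := by
        simpa [hI, hb, add_smul, add_assoc] using hmem
      have := le_csSup hIcomp.bddAbove this
      linarith
    have houta : ∀ ε : ℝ, 0 < ε → a + ε • (-d) ∉ s := by
      intro ε hε hmem
      have : α - ε ∈ I := by
        have : x + (α - ε) • d = a + ε • (-d) := by
          rw [ha]
          rw [sub_smul, smul_neg]
          abel
        rw [hI]
        simp only [Set.mem_setOf_eq, this]
        exact hmem
      have := csInf_le hIcomp.bddBelow this
      linarith
    have hbhull := key b hbs d hd houtb
    have hahull := key a has (-d) (Submodule.neg_mem _ hd) houta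
    have hβα : 0 < β - α := by linarith
    have hxseg : x ∈ segment ℝ a b := by
      refine ⟨β / (β - α), -α / (β - α), div_nonneg (by linarith) hβα.le, div_nonneg (by linarith) hβα.le, by field_simp; ring, ?_⟩
      rw [ha, hb]
      match_scalars
      · field_simp
        ring
      · field_simp
        ring
    exact (convex_convexHull ℝ _).segment_subset hahull hbhull hxseg

open Classical in
lemma prod_hull_step {X Y : Type*} [Fintype X] [Fintype Y] (EX : Set (X → ℝ)) (EY : Set (Y → ℝ))
    (G : Set (X × Y → ℝ))
    (hG : ∀ r ∈ EX, ∀ f : X → (Y → ℝ), (∀ x, f x ∈ EY) →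
      (fun z : X × Y => r z.1 * f z.1 z.2) ∈ G)
    (r : X → ℝ) (hr : r ∈ convexHull ℝ EX) :
    ∀ (s : Finset X) (f : X → (Y → ℝ)),
      (∀ x, (x ∈ s → f x ∈ convexHull ℝ EY) ∧ (x ∉ s → f x ∈ EY)) →
      (fun z : X × Y => r z.1 * f z.1 z.2) ∈ convexHull ℝ G := by
  intro s
  induction s using Finset.induction_on with
  | empty =>
    intro f hf
    -- linear in r
    let Φ : (X → ℝ) →ₗ[ℝ] (X × Y → ℝ) :=
      { toFun := fun r => fun z => r z.1 * f z.1 z.2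
        map_add' := by intro u v; funext z; simp [add_mul]
        map_smul' := by intro c u; funext z; simp [smul_eq_mul]; ring }
    have h1 : (fun z : X × Y => r z.1 * f z.1 z.2) ∈ Φ '' (convexHull ℝ EX) :=
      ⟨r, hr, rfl⟩
    rw [LinearMap.image_convexHull] at h1
    refine convexHull_mono ?_ h1
    rintro _ ⟨u, hu, rfl⟩
    exact hG u hu f (fun x => (hf x).2 (Finset.notMem_empty x))
  | @insert a s ha IH =>
    intro f hf
    let Λ : (Y → ℝ) →ₗ[ℝ] (X × Y → ℝ) :=
      { toFun := fun g => fun z => if z.1 = a then r a * g z.2 else 0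
        map_add' := by intro u v; funext z; by_cases h : z.1 = a <;> simp [h, mul_add]
        map_smul' := by
          intro c u; funext z; by_cases h : z.1 = a <;> simp [h, smul_eq_mul] <;> ring }
    let Ψ : (Y → ℝ) →ᵃ[ℝ] (X × Y → ℝ) :=
      { toFun := fun g => fun z => if z.1 = a then r a * g z.2 else r z.1 * f z.1 z.2
        linear := Λ
        map_vadd' := by
          intro p v
          funext z
          by_cases h : z.1 = a <;>
            simp [Λ, h, vadd_eq_add, mul_add] }
    have hΨEY : Ψ '' EY ⊆ convexHull ℝ G := by
      rintro _ ⟨g, hg, rfl⟩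
      have hupd : (fun z : X × Y => r z.1 * (Function.update f a g) z.1 z.2) ∈ convexHull ℝ G := by
        refine IH (Function.update f a g) (fun x => ⟨fun hx => ?_, fun hx => ?_⟩)
        · rw [Function.update_of_ne (by rintro rfl; exact ha hx)]
          exact (hf x).1 (Finset.mem_insert_of_mem hx)
        · by_cases hxa : x = a
          · subst hxa; rw [Function.update_self]; exact hg
          · rw [Function.update_of_ne hxa]
            exact (hf x).2 (fun h => (Finset.mem_insert.mp h).elim hxa hx)
      have heq : (Ψ g : X × Y → ℝ) = fun z : X × Y => r z.1 * (Function.update f a g) z.1 z.2 := by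
        funext z
        by_cases h : z.1 = a
        · simp [Ψ, h, Function.update_self]
        · simp [Ψ, h, Function.update_of_ne h]
      rw [heq]
      exact hupd
    have hmono : Ψ '' (convexHull ℝ EY) ⊆ convexHull ℝ G := by
      rw [AffineMap.image_convexHull]
      exact convexHull_min hΨEY (convex_convexHull ℝ G)
    have hfa : f a ∈ convexHull ℝ EY := (hf a).1 (Finset.mem_insert_self a s)
    have heq2 : (Ψ (f a) : X × Y → ℝ) = fun z : X × Y => r z.1 * f z.1 z.2 := by
      funext z
      by_cases h : z.1 = a
      · simp [Ψ, h]
      · simp [Ψ, h]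
    rw [← heq2]
    exact hmono ⟨f a, hfa, rfl⟩


/-- If the marginal of a joint distribution `p` on `X × Y` lies in a
nonempty compact convex set `SX` of distributions on `X`, and all conditionals
(on points of positive marginal) lie in a nonempty compact convex set `SY` of
distributions on `Y`, then `p` lies in the convex hull of the products of an
extreme point `r` of `SX` with extreme points `f x` of `SY`. -/
theorem sv_joint_convex_decomposition
    {X Y : Type*} [Fintype X] [Fintype Y]
    (SX : Set (X → ℝ)) (SY : Set (Y → ℝ))
    (hSXprob : ∀ q ∈ SX, (∀ x, 0 ≤ q x) ∧ ∑ x, q x = 1)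
    (hSYprob : ∀ q ∈ SY, (∀ y, 0 ≤ q y) ∧ ∑ y, q y = 1)
    (hSXne : SX.Nonempty) (hSXconv : Convex ℝ SX) (hSXcomp : IsCompact SX)
    (hSYne : SY.Nonempty) (hSYconv : Convex ℝ SY) (hSYcomp : IsCompact SY)
    (p : X × Y → ℝ) (hp0 : ∀ z, 0 ≤ p z) (hp1 : ∑ z, p z = 1)
    (hmarg : (fun x => ∑ y, p (x, y)) ∈ SX)
    (hcond : ∀ x, 0 < ∑ y, p (x, y) →
      (fun y => p (x, y) / ∑ y', p (x, y')) ∈ SY) :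
    p ∈ convexHull ℝ {q : X × Y → ℝ |
      ∃ r ∈ Set.extremePoints ℝ SX, ∃ f : X → (Y → ℝ),
        (∀ x, f x ∈ Set.extremePoints ℝ SY) ∧ ∀ x y, q (x, y) = r x * f x y} := by
    classical
  set G : Set (X × Y → ℝ) := {q : X × Y → ℝ |
      ∃ r ∈ Set.extremePoints ℝ SX, ∃ f : X → (Y → ℝ),
        (∀ x, f x ∈ Set.extremePoints ℝ SY) ∧ ∀ x y, q (x, y) = r x * f x y} with hG
  have hSXhull : SX ⊆ convexHull ℝ (SX.extremePoints ℝ) :=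
    minkowski_aux _ SX hSXcomp hSXconv le_rfl
  have hSYhull : SY ⊆ convexHull ℝ (SY.extremePoints ℝ) :=
    minkowski_aux _ SY hSYcomp hSYconv le_rfl
  set m : X → ℝ := fun x => ∑ y, p (x, y) with hm
  obtain ⟨g₀, hg₀⟩ := hSYne
  set c : X → (Y → ℝ) := fun x =>
    if h : 0 < ∑ y, p (x, y) then (fun y => p (x, y) / ∑ y', p (x, y')) else g₀ with hc
  have hcS : ∀ x, c x ∈ SY := by
    intro x
    by_cases h : 0 < ∑ y, p (x, y)
    · simp only [hc]
      split_ifs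
      exact hcond x h
    · simp only [hc]
      split_ifs
      exact hg₀
  have hpeq : p = fun z : X × Y => m z.1 * c z.1 z.2 := by
    funext z
    obtain ⟨x, y⟩ := z
    by_cases h : 0 < ∑ y', p (x, y')
    · simp only [hc, hm]
      split_ifs
      field_simp
    · have hsum0 : ∑ y', p (x, y') = 0 :=
        le_antisymm (not_lt.mp h) (Finset.sum_nonneg fun i _ => hp0 (x, i))
      have hpz : p (x, y) = 0 := by
        have hle : p (x, y) ≤ ∑ y', p (x, y') :=
          Finset.single_le_sum (fun i _ => hp0 (x, i)) (Finset.mem_univ y)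
        have := hp0 (x, y)
        linarith [hsum0 ▸ hle]
      simp only [hm, hsum0, zero_mul]
      exact hpz
  have hGgen : ∀ r ∈ SX.extremePoints ℝ, ∀ f : X → (Y → ℝ),
      (∀ x, f x ∈ SY.extremePoints ℝ) →
      (fun z : X × Y => r z.1 * f z.1 z.2) ∈ G :=
    fun r hr f hf => ⟨r, hr, f, hf, fun x y => rfl⟩
  rw [hpeq]
  exact prod_hull_step (SX.extremePoints ℝ) (SY.extremePoints ℝ) G hGgen m
    (hSXhull hmarg) Finset.univ c
    (fun x => ⟨fun _ => hSYhull (hcS x), fun hx => absurd (Finset.mem_univ x) hx⟩)
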